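/- Let (K,v) be a valued field where v extends uniquely to the maximal pro-p extension K(p), and let f ∈ O_v[T] be a polynomial that splits in K(p). If a ∈ O_v satisfies f̄(ā) = 0 and f̄'(ā) ≠ 0 in the residue field, then there exists α ∈ O_v with f(α) = 0 and ᾱ = ā. -/

import Mathlib

/-- The compositum `K(p)` of all Galois extensions of `K` of `p`-power degree inside an
extension field `Ω` (to be taken separably/algebraically closed). -/
@[irreducible] noncomputable def pClosure (p : ℕ) (K : Type*) [Field K]
    (Ω : Type*) [Field Ω] [Algebra K Ω] : IntermediateField K Ω :=
  ⨆ N ∈ {N : IntermediateField K Ω |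
      IsGalois K N ∧ FiniteDimensional K N ∧ ∃ k : ℕ, Module.finrank K N = p ^ k}, N

section PHenselAuxSec
open Polynomial
namespace PHenselAux

variable {L : Type*} [Field L] (W : ValuationSubring L)


variable {L : Type*} [Field L] (W : ValuationSubring L)

theorem coeff_mul_le {p q : L[X]} (hp : ∀ n, W.valuation (p.coeff n) ≤ 1)
    (hq : ∀ n, W.valuation (q.coeff n) ≤ 1) (n : ℕ) :
    W.valuation ((p * q).coeff n) ≤ 1 := by
  rw [coeff_mul]
  refine Valuation.map_sum_le _ fun i _ => ?_
  rw [map_mul]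
  exact mul_le_one' (hp _) (hq _)

theorem coeff_multiset_prod_le (m : Multiset L[X])
    (h : ∀ p ∈ m, ∀ n, W.valuation (p.coeff n) ≤ 1) :
    ∀ n, W.valuation (m.prod.coeff n) ≤ 1 := by
  induction m using Multiset.induction with
  | empty =>
    intro n
    simp only [Multiset.prod_zero, coeff_one]
    split <;> simp
  | cons p m ih =>
    intro n
    rw [Multiset.prod_cons]
    exact coeff_mul_le W (h p (Multiset.mem_cons_self _ _))
      (ih fun q hq k => h q (Multiset.mem_cons_of_mem hq) k) n

/-- the predicate "congruent to 1 mod the maximal ideal, with integral coefficients" -/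
def P1 (q : L[X]) : Prop :=
  (∀ n, W.valuation (q.coeff n) ≤ 1) ∧ (∀ n, n ≠ 0 → W.valuation (q.coeff n) < 1) ∧
    W.valuation (q.coeff 0 - 1) < 1

theorem P1.mul {p q : L[X]} (hp : P1 W p) (hq : P1 W q) : P1 W (p * q) := by
  obtain ⟨hp1, hp2, hp3⟩ := hp
  obtain ⟨hq1, hq2, hq3⟩ := hq
  refine ⟨coeff_mul_le W hp1 hq1, fun n hn => ?_, ?_⟩
  · rw [coeff_mul]
    refine Valuation.map_sum_lt _ one_ne_zero fun i hi => ?_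
    rw [map_mul]
    rcases eq_or_ne i.1 0 with h1 | h1
    · have h2 : i.2 ≠ 0 := by
        rcases Finset.HasAntidiagonal.mem_antidiagonal.1 hi with rfl
        simpa [h1] using hn
      calc W.valuation (p.coeff i.1) * W.valuation (q.coeff i.2)
          ≤ 1 * W.valuation (q.coeff i.2) := mul_le_mul_left (hp1 _) _
        _ < 1 := by rw [one_mul]; exact hq2 _ h2
    · calc W.valuation (p.coeff i.1) * W.valuation (q.coeff i.2)
          ≤ W.valuation (p.coeff i.1) * 1 := mul_le_mul_right (hq1 _) _
        _ < 1 := by rw [mul_one]; exact hp2 _ h1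
  · rw [mul_coeff_zero]
    have : p.coeff 0 * q.coeff 0 - 1 = (p.coeff 0 - 1) * q.coeff 0 + (q.coeff 0 - 1) := by ring
    rw [this]
    refine lt_of_le_of_lt (W.valuation.map_add _ _) (max_lt ?_ hq3)
    rw [map_mul]
    calc W.valuation (p.coeff 0 - 1) * W.valuation (q.coeff 0)
        ≤ W.valuation (p.coeff 0 - 1) * 1 := mul_le_mul_right (hq1 _) _
      _ < 1 := by rw [mul_one]; exact hp3

theorem P1.one : P1 W 1 := by
  refine ⟨fun n => ?_, fun n hn => ?_, by simp⟩
  · rcases eq_or_ne n 0 with rfl | h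
    · simp
    · simp [coeff_one, h]
  · simp [coeff_one, hn]

set_option maxHeartbeats 1000000 in
theorem P1_unit_factor {t : L} (ht : W.valuation t < 1) : P1 W (1 - C t * X) := by
  have hc : ∀ n, (1 - C t * X : L[X]).coeff n = if n = 0 then 1 else if n = 1 then -t else 0 := by
    intro n
    rcases n with _ | n
    · simp
    · rcases n with _ | n <;> simp [coeff_one, coeff_C_mul, coeff_X, Nat.succ_ne_zero]
  refine ⟨fun n => ?_, fun n hn => ?_, by simp [hc]⟩
  · rw [hc]; split
    · simp
    · split
      · simpa using le_of_lt ht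
      · simp
  · rw [hc]; simp only [hn, if_false]
    split
    · simpa using ht
    · simpa using zero_lt_one

set_option maxHeartbeats 1000000 in
theorem P1_u (T : Multiset L) (hT : ∀ t ∈ T, W.valuation t < 1) :
    P1 W ((T.map (fun t => (1 : L[X]) - C t * X)).prod) := by
  induction T using Multiset.induction with
  | empty =>
    rw [Multiset.map_zero, Multiset.prod_zero]
    exact P1.one W
  | cons t T ih =>
    rw [Multiset.map_cons, Multiset.prod_cons]
    exact P1.mul W (P1_unit_factor W (hT t (Multiset.mem_cons_self _ _)))
      (ih fun s hs => hT s (Multiset.mem_cons_of_mem hs))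



theorem eval_le {p : L[X]} {b : L} (hp : ∀ n, W.valuation (p.coeff n) ≤ 1)
    (hb : W.valuation b ≤ 1) : W.valuation (p.eval b) ≤ 1 := by
  rw [eval_eq_sum_range]
  refine Valuation.map_sum_le _ fun i _ => ?_
  rw [map_mul, map_pow]
  exact mul_le_one' (hp _) (pow_le_one' hb _)

theorem eval_lt {p : L[X]} {b : L} (hp : ∀ n, W.valuation (p.coeff n) < 1)
    (hb : W.valuation b ≤ 1) : W.valuation (p.eval b) < 1 := by
  rw [eval_eq_sum_range]
  refine Valuation.map_sum_lt _ one_ne_zero fun i _ => ?_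
  rw [map_mul, map_pow]
  calc W.valuation (p.coeff i) * W.valuation b ^ i
      ≤ W.valuation (p.coeff i) * 1 := mul_le_mul_right (pow_le_one' hb _) _
    _ < 1 := by rw [mul_one]; exact hp _

theorem pow_sub_pow_le {b r : L} (hb : W.valuation b ≤ 1) (hr : W.valuation r ≤ 1) :
    ∀ i : ℕ, W.valuation (b ^ i - r ^ i) ≤ W.valuation (b - r) := by
  intro i
  induction i with
  | zero => simp
  | succ i ih =>
    have key : b ^ (i + 1) - r ^ (i + 1) = b * (b ^ i - r ^ i) + (b - r) * r ^ i := by ring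
    rw [key]
    refine le_trans (W.valuation.map_add _ _) (max_le ?_ ?_)
    · rw [map_mul]
      calc W.valuation b * W.valuation (b ^ i - r ^ i)
          ≤ 1 * W.valuation (b - r) := mul_le_mul' hb ih
        _ = W.valuation (b - r) := one_mul _
    · rw [map_mul, map_pow]
      calc W.valuation (b - r) * W.valuation r ^ i
          ≤ W.valuation (b - r) * 1 := mul_le_mul_right (pow_le_one' hr _) _
        _ = _ := mul_one _

theorem eval_sub_eval_lt {p : L[X]} {b r : L} (hp : ∀ n, W.valuation (p.coeff n) ≤ 1)
    (hb : W.valuation b ≤ 1) (hr : W.valuation r ≤ 1) (hbr : W.valuation (b - r) < 1) :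
    W.valuation (p.eval b - p.eval r) < 1 := by
  rw [eval_eq_sum_range, eval_eq_sum_range, ← Finset.sum_sub_distrib]
  refine Valuation.map_sum_lt _ one_ne_zero fun i _ => ?_
  have : p.coeff i * b ^ i - p.coeff i * r ^ i = p.coeff i * (b ^ i - r ^ i) := by ring
  rw [this, map_mul]
  calc W.valuation (p.coeff i) * W.valuation (b ^ i - r ^ i)
      ≤ 1 * W.valuation (b - r) := mul_le_mul' (hp _) (pow_sub_pow_le W hb hr i)
    _ < 1 := by rw [one_mul]; exact hbr

theorem multiset_prod_val_le (m : Multiset L) (h : ∀ x ∈ m, W.valuation x ≤ 1) :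
    W.valuation m.prod ≤ 1 := by
  rw [map_multiset_prod]
  have := Multiset.prod_le_pow_card (m.map W.valuation) 1 ?_
  · simpa using this
  · intro x hx
    obtain ⟨y, hy, rfl⟩ := Multiset.mem_map.1 hx
    exact h y hy


theorem val_eq_of_close' {x y : L} (h : W.valuation (x - y) < W.valuation y) :
    W.valuation x = W.valuation y := by
  have := W.valuation.map_add_eq_of_lt_right h
  simpa using this

theorem lt_one_iff_inv_notMem {x : L} (hx : x ≠ 0) :
    W.valuation x < 1 ↔ x⁻¹ ∉ W := by
  rw [← ValuationSubring.valuation_le_one_iff, map_inv₀]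
  have h0 : W.valuation x ≠ 0 := (Valuation.ne_zero_iff _).2 hx
  constructor
  · intro h hle
    have : (1 : ValuationSubring.ValueGroup W) ≤ W.valuation x :=
      inv_le_one₀ (zero_lt_iff.2 h0) |>.1 hle
    exact absurd h (not_lt.2 this)
  · intro h
    rcases lt_or_ge (W.valuation x) 1 with h1 | h1
    · exact h1
    · exact absurd (inv_le_one₀ (zero_lt_iff.2 h0) |>.2 h1) h

theorem exists_unique_close_root {P : L[X]}
    (hsp : P.Splits)
    (hc : ∀ n, W.valuation (P.coeff n) ≤ 1)
    {b : L} (hb : W.valuation b ≤ 1)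
    (hPb : W.valuation (P.eval b) < 1)
    (hPb' : W.valuation ((derivative P).eval b) = 1) :
    ∃ r ∈ P.roots, W.valuation (b - r) < 1 ∧
      ∀ r' ∈ P.roots, W.valuation (b - r') < 1 → r' = r := by
  classical
  set R := P.roots with hR
  set S := R.filter (fun r => W.valuation r ≤ 1) with hSdef
  set T := R.filter (fun r => ¬ W.valuation r ≤ 1) with hTdef
  have hST : S + T = R := Multiset.filter_add_not _ R
  have hTlt : ∀ t ∈ T, (1 : W.ValueGroup) < W.valuation t := fun t ht =>
    not_le.1 ((Multiset.mem_filter.1 ht).2)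
  have hTne : ∀ t ∈ T, t ≠ 0 := by
    intro t ht h0
    have := hTlt t ht
    rw [h0, map_zero] at this
    exact absurd this (by simp)
  have hTinv : ∀ t ∈ T, W.valuation t⁻¹ < 1 := by
    intro t ht
    rw [map_inv₀]
    exact (inv_lt_one₀ (lt_trans zero_lt_one (hTlt t ht))).2 (hTlt t ht)
  have hSle : ∀ s ∈ S, W.valuation s ≤ 1 := fun s hs => (Multiset.mem_filter.1 hs).2
  set g : L[X] := (S.map (fun s => X - C s)).prod with hgdef
  set u : L[X] := (T.map (fun t => (1 : L[X]) - C t⁻¹ * X)).prod with hudef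
  set d : L := P.leadingCoeff * (T.map (fun t => -t)).prod with hddef
  -- the factorization P = C d * (u * g)
  have key : ∀ t : L, t ≠ 0 → (X - C t : L[X]) = C (-t) * (1 - C t⁻¹ * X) := by
    intro t ht
    have h1 : (-t) * t⁻¹ = -1 := by field_simp
    rw [mul_sub, mul_one, ← mul_assoc, ← C_mul, h1]
    simp only [C_neg, C_1]
    ring
  have hTfac : (T.map (fun a => X - C a)).prod = C ((T.map (fun t => -t)).prod) * u := by
    rw [Multiset.map_congr rfl (fun t ht => key t (hTne t ht)), Multiset.prod_map_mul]
    congr 1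
    rw [map_multiset_prod, Multiset.map_map]
    rfl
  have hfact : P = C d * (u * g) := by
    calc P = C P.leadingCoeff * (R.map fun a => X - C a).prod :=
          hsp.eq_prod_roots
      _ = C P.leadingCoeff *
          ((S.map fun a => X - C a).prod * (T.map fun a => X - C a).prod) := by
          rw [← hST, Multiset.map_add, Multiset.prod_add]
      _ = C P.leadingCoeff * (g * (C ((T.map (fun t => -t)).prod) * u)) := by rw [hTfac]
      _ = C d * (u * g) := by rw [hddef, C_mul]; ring
  -- facts about g
  have hgmonic : g.Monic :=
    monic_multiset_prod_of_monic _ _ (fun s _ => monic_X_sub_C s)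
  have hgdeg : g.natDegree = Multiset.card S := by
    rw [hgdef]; exact natDegree_multiset_prod_X_sub_C_eq_card S
  have hgc : ∀ n, W.valuation (g.coeff n) ≤ 1 := by
    refine coeff_multiset_prod_le W _ ?_
    intro q hq n
    obtain ⟨s, hs, rfl⟩ := Multiset.mem_map.1 hq
    rcases n with _ | n
    · simpa [Valuation.map_neg] using hSle s hs
    · rcases n with _ | n <;> simp [coeff_X, coeff_C]
  -- facts about u
  have hu1 : P1 W u := by
    have h0 := P1_u W (T.map (fun t => t⁻¹)) (by
      intro x hx
      obtain ⟨t, ht, rfl⟩ := Multiset.mem_map.1 hx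
      exact hTinv t ht)
    simpa only [Multiset.map_map, Function.comp_def] using h0
  obtain ⟨hu1a, hu1b, hu1c⟩ := hu1
  -- valuation of the crucial coefficient of u * g is 1
  have hN : W.valuation ((u * g).coeff (Multiset.card S)) = 1 := by
    have hterm : (u * g).coeff (Multiset.card S) =
        u.coeff 0 * g.coeff (Multiset.card S) +
          ∑ x ∈ (Finset.HasAntidiagonal.antidiagonal (Multiset.card S)).erase (0, Multiset.card S),
            u.coeff x.1 * g.coeff x.2 := by
      rw [coeff_mul]
      exact (Finset.add_sum_erase (Finset.HasAntidiagonal.antidiagonal (Multiset.card S))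
        (fun x => u.coeff x.1 * g.coeff x.2) (a := (0, Multiset.card S))
        (Finset.HasAntidiagonal.mem_antidiagonal.2 (zero_add _))).symm
    have hgN : g.coeff (Multiset.card S) = 1 := by
      rw [← hgdeg]; exact hgmonic.coeff_natDegree
    have hclose : W.valuation ((u * g).coeff (Multiset.card S) - 1) < 1 := by
      rw [hterm, hgN, mul_one]
      have hre : u.coeff 0 +
          (∑ x ∈ (Finset.HasAntidiagonal.antidiagonal (Multiset.card S)).erase (0, Multiset.card S),
            u.coeff x.1 * g.coeff x.2) - 1 = (u.coeff 0 - 1) +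
          ∑ x ∈ (Finset.HasAntidiagonal.antidiagonal (Multiset.card S)).erase (0, Multiset.card S),
            u.coeff x.1 * g.coeff x.2 := by ring
      rw [hre]
      refine lt_of_le_of_lt (W.valuation.map_add _ _) (max_lt hu1c ?_)
      refine Valuation.map_sum_lt _ one_ne_zero ?_
      intro x hx
      have hx1 : x.1 ≠ 0 := by
        intro h0
        have hxa := Finset.HasAntidiagonal.mem_antidiagonal.1 (Finset.mem_of_mem_erase hx)
        have : x = (0, Multiset.card S) := by
          ext
          · exact h0
          · rw [← hxa, h0, zero_add]
        exact absurd this (Finset.ne_of_mem_erase hx)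
      rw [map_mul]
      calc W.valuation (u.coeff x.1) * W.valuation (g.coeff x.2)
          ≤ W.valuation (u.coeff x.1) * 1 := mul_le_mul_right (hgc _) _
        _ < 1 := by rw [mul_one]; exact hu1b _ hx1
    have := val_eq_of_close' W (x := (u * g).coeff (Multiset.card S)) (y := 1)
      (by rwa [map_one])
    rwa [map_one] at this
  have hdle : W.valuation d ≤ 1 := by
    have hPN : P.coeff (Multiset.card S) = d * (u * g).coeff (Multiset.card S) := by
      rw [hfact, coeff_C_mul]
    have := hc (Multiset.card S)
    rwa [hPN, map_mul, hN, mul_one] at this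
  -- u evaluates close to 1
  have hueps : W.valuation (u.eval b - 1) < 1 := by
    have h1 : u.eval b - 1 = (u - 1).eval b := by simp
    rw [h1]
    refine eval_lt W ?_ hb
    intro n
    rcases eq_or_ne n 0 with rfl | hn
    · simpa using hu1c
    · simpa [coeff_one, hn] using hu1b n hn
  have hgb_le : W.valuation (g.eval b) ≤ 1 := eval_le W hgc hb
  have h5 : W.valuation (P.eval b - d * g.eval b) < 1 := by
    have h1 : P.eval b - d * g.eval b = d * g.eval b * (u.eval b - 1) := by
      rw [hfact]; simp only [eval_mul, eval_C]; ring
    rw [h1, map_mul, map_mul]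
    refine lt_of_le_of_lt (mul_le_mul' (mul_le_mul' hdle hgb_le) le_rfl) ?_
    simpa using hueps
  -- derivative coefficients
  have hnat_le : ∀ n : ℕ, W.valuation ((n : L) + 1) ≤ 1 := by
    intro n
    rw [ValuationSubring.valuation_le_one_iff]
    exact add_mem (natCast_mem W n) (one_mem W)
  have hgdc : ∀ n, W.valuation ((derivative g).coeff n) ≤ 1 := by
    intro n
    rw [coeff_derivative, map_mul]
    exact mul_le_one' (hgc _) (by push_cast; exact hnat_le n)
  have hudc : ∀ n, W.valuation ((derivative u).coeff n) < 1 := by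
    intro n
    rw [coeff_derivative, map_mul]
    calc W.valuation (u.coeff (n + 1)) * W.valuation (n + 1 : L)
        ≤ W.valuation (u.coeff (n + 1)) * 1 :=
          mul_le_mul_right (by push_cast; exact hnat_le n) _
      _ < 1 := by rw [mul_one]; exact hu1b _ (Nat.succ_ne_zero n)
  have hP'evb : (derivative P).eval b =
      d * ((derivative u).eval b * g.eval b + u.eval b * (derivative g).eval b) := by
    rw [hfact, derivative_C_mul, derivative_mul]
    simp only [eval_mul, eval_add, eval_C]
  have h6 : W.valuation ((derivative P).eval b - d * (derivative g).eval b) < 1 := by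
    have h1 : (derivative P).eval b - d * (derivative g).eval b =
        d * ((derivative u).eval b * g.eval b + (u.eval b - 1) * (derivative g).eval b) := by
      rw [hP'evb]; ring
    rw [h1, map_mul]
    refine lt_of_le_of_lt (mul_le_mul' hdle le_rfl) ?_
    rw [one_mul]
    refine lt_of_le_of_lt (W.valuation.map_add _ _) (max_lt ?_ ?_)
    · rw [map_mul]
      calc W.valuation ((derivative u).eval b) * W.valuation (g.eval b)
          ≤ W.valuation ((derivative u).eval b) * 1 := mul_le_mul_right hgb_le _
        _ < 1 := by rw [mul_one]; exact eval_lt W hudc hb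
    · rw [map_mul]
      calc W.valuation (u.eval b - 1) * W.valuation ((derivative g).eval b)
          ≤ W.valuation (u.eval b - 1) * 1 := mul_le_mul_right (eval_le W hgdc hb) _
        _ < 1 := by rw [mul_one]; exact hueps
  have hdg' : W.valuation (d * (derivative g).eval b) = 1 := by
    have h1 : W.valuation (d * (derivative g).eval b - (derivative P).eval b) <
        W.valuation ((derivative P).eval b) := by
      rw [hPb']
      have h2 : d * (derivative g).eval b - (derivative P).eval b =
          -((derivative P).eval b - d * (derivative g).eval b) := by ring
      rw [h2, Valuation.map_neg]
      exact h6
    rw [val_eq_of_close' W h1, hPb']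
  have h7 : W.valuation d * W.valuation ((derivative g).eval b) = 1 := by
    rw [← map_mul]; exact hdg'
  have hg'le : W.valuation ((derivative g).eval b) ≤ 1 := eval_le W hgdc hb
  have hda : W.valuation d = 1 := by
    refine le_antisymm hdle ?_
    calc (1 : W.ValueGroup) = W.valuation d * W.valuation ((derivative g).eval b) := h7.symm
      _ ≤ W.valuation d * 1 := mul_le_mul_right hg'le _
      _ = W.valuation d := mul_one _
  have hg'b1 : W.valuation ((derivative g).eval b) = 1 := by
    rwa [hda, one_mul] at h7
  have hgb_lt : W.valuation (g.eval b) < 1 := by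
    have h1 : W.valuation (d * g.eval b) < 1 := by
      have h2 : d * g.eval b = P.eval b - (P.eval b - d * g.eval b) := by ring
      rw [h2]
      exact lt_of_le_of_lt (W.valuation.map_sub _ _) (max_lt hPb h5)
    rwa [map_mul, hda, one_mul] at h1
  have hgevalb : g.eval b = (S.map (fun s => b - s)).prod := by
    rw [hgdef, eval_multiset_prod, Multiset.map_map]
    congr 1
    refine Multiset.map_congr rfl ?_
    intro s _
    simp
  -- existence of a close root
  have hex : ∃ s ∈ S, W.valuation (b - s) < 1 := by
    by_contra hno
    push_neg at hno
    have hall : ∀ s ∈ S, W.valuation (b - s) = 1 := fun s hs =>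
      le_antisymm (le_trans (W.valuation.map_sub _ _) (max_le hb (hSle s hs))) (hno s hs)
    have h1 : W.valuation (g.eval b) = 1 := by
      rw [hgevalb, map_multiset_prod]
      refine Multiset.prod_eq_one ?_
      intro x hx
      rw [Multiset.map_map] at hx
      obtain ⟨s, hs, rfl⟩ := Multiset.mem_map.1 hx
      exact hall s hs
    rw [h1] at hgb_lt
    exact absurd hgb_lt (lt_irrefl _)
  obtain ⟨r, hrS, hrb⟩ := hex
  have hrR : r ∈ R := Multiset.mem_of_mem_filter hrS
  have hrle : W.valuation r ≤ 1 := hSle r hrS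
  refine ⟨r, hrR, hrb, ?_⟩
  -- uniqueness
  have hrb' : W.valuation (r - b) < 1 := by
    rw [show r - b = -(b - r) by ring, Valuation.map_neg]
    exact hrb
  have hg'r : W.valuation ((derivative g).eval r) = 1 := by
    have h1 : W.valuation ((derivative g).eval r - (derivative g).eval b) < 1 :=
      eval_sub_eval_lt W hgdc hrle hb hrb'
    have h2 := val_eq_of_close' W (x := (derivative g).eval r) (y := (derivative g).eval b)
      (by rwa [hg'b1])
    rwa [hg'b1] at h2
  have hform : (derivative g).eval r = ((S.erase r).map (fun s => r - s)).prod := by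
    rw [hgdef]
    exact eval_multiset_prod_X_sub_C_derivative hrS
  intro r' hr'R hr'b
  have hr'le : W.valuation r' ≤ 1 := by
    rw [show r' = b - (b - r') by ring]
    exact le_trans (W.valuation.map_sub _ _) (max_le hb hr'b.le)
  have hr'S : r' ∈ S := Multiset.mem_filter.2 ⟨hr'R, hr'le⟩
  by_contra hne
  have hr'er : r' ∈ S.erase r := (Multiset.mem_erase_of_ne hne).2 hr'S
  have hlt : W.valuation ((derivative g).eval r) < 1 := by
    rw [hform]
    conv_lhs => rw [← Multiset.cons_erase hr'er]
    rw [Multiset.map_cons, Multiset.prod_cons, map_mul]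
    have h1 : W.valuation (r - r') < 1 := by
      rw [show r - r' = (r - b) + (b - r') by ring]
      exact lt_of_le_of_lt (W.valuation.map_add _ _) (max_lt hrb' hr'b)
    have h2 : W.valuation (((S.erase r).erase r').map (fun s => r - s)).prod ≤ 1 := by
      refine multiset_prod_val_le W _ ?_
      intro x hx
      obtain ⟨s, hs, rfl⟩ := Multiset.mem_map.1 hx
      have hsS : s ∈ S := Multiset.mem_of_mem_erase (Multiset.mem_of_mem_erase hs)
      exact le_trans (W.valuation.map_sub _ _) (max_le hrle (hSle s hsS))
    calc W.valuation (r - r') * W.valuation (((S.erase r).erase r').map (fun s => r - s)).prod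
        ≤ W.valuation (r - r') * 1 := mul_le_mul_right h2 _
      _ < 1 := by rw [mul_one]; exact h1
  rw [hg'r] at hlt
  exact absurd hlt (lt_irrefl _)

end PHenselAux
end PHenselAuxSec


section GaloisAux
open Polynomial

theorem fixed_point_mem_range {K L : Type*} [Field K] [Field L] [Algebra K L]
    [Normal K L] [Algebra.IsSeparable K L] {x : L}
    (hx : ∀ σ : L ≃ₐ[K] L, σ x = x) : ∃ k : K, algebraMap K L k = x := by
  have hnormal : Normal K L := inferInstance
  have hint : IsIntegral K x := hnormal.isIntegral x
  have halg : Algebra.IsAlgebraic K L := ⟨fun y => (hnormal.isIntegral y).isAlgebraic⟩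
  classical
  by_contra hmem
  push_neg at hmem
  set q := minpoly K x with hq
  have hq0 : q ≠ 0 := minpoly.ne_zero hint
  have hsep : q.Separable := Algebra.IsSeparable.isSeparable K x
  have hsplits : Splits (q.map (algebraMap K L)) := hnormal.splits x
  set M := (q.map (algebraMap K L)).roots with hM
  have hcard : M.card = q.natDegree := by
    rw [hM, ← hsplits.natDegree_eq_card_roots, natDegree_map]
  have hnodup : M.Nodup := nodup_roots (Polynomial.Separable.map hsep)
  have hxM : x ∈ M := by
    rw [hM, mem_roots (Polynomial.map_ne_zero hq0)]
    rw [IsRoot, eval_map, ← aeval_def, minpoly.aeval]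
  have hdeg : 2 ≤ q.natDegree := by
    rcases Nat.lt_or_ge q.natDegree 2 with h | h
    · interval_cases h' : q.natDegree
      · exact absurd h' (minpoly.natDegree_pos hint).ne'
      · exfalso
        have hxrange : x ∈ (algebraMap K L).range :=
          minpoly.degree_eq_one_iff.mp (by rw [degree_eq_natDegree hq0, h']; rfl)
        obtain ⟨k, hk⟩ := hxrange
        exact hmem k hk
    · exact h
  -- find a second root
  have hM' : x ∈ M := hxM
  obtain ⟨M', hM'eq⟩ : ∃ M', M = x ::ₘ M' := ⟨M.erase x, (Multiset.cons_erase hxM).symm⟩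
  have hM'card : 1 ≤ M'.card := by
    have := hcard
    rw [hM'eq, Multiset.card_cons] at this
    omega
  obtain ⟨y, hyM'⟩ := Multiset.card_pos_iff_exists_mem.1 (lt_of_lt_of_le zero_lt_one hM'card)
  have hynex : y ≠ x := by
    intro h
    have := hnodup
    rw [hM'eq, Multiset.nodup_cons] at this
    exact this.1 (h ▸ hyM')
  have hyroot : (aeval y) q = 0 := by
    have hyM : y ∈ M := by rw [hM'eq]; exact Multiset.mem_cons_of_mem hyM'
    rw [hM, mem_roots (Polynomial.map_ne_zero hq0)] at hyM
    rwa [IsRoot, eval_map, ← aeval_def] at hyM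
  obtain ⟨φ, hφ⟩ := IntermediateField.exists_algHom_of_adjoin_splits_of_aeval
    (F := K) (E := L) (K := L) (S := Set.univ)
    (fun s _ => ⟨hnormal.isIntegral s, hnormal.splits s⟩)
    (IntermediateField.adjoin_univ K L) hyroot
  set σ := (Algebra.IsAlgebraic.algEquivEquivAlgHom K L).symm φ with hσ
  have : σ x = φ x := rfl
  rw [hx σ] at this
  exact hynex (hφ ▸ this.symm)

theorem pClosure_normal (p : ℕ) (K : Type*) [Field K] (Ω : Type*) [Field Ω] [Algebra K Ω] :
    Normal K (pClosure p K Ω) := by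
  rw [pClosure]
  rw [iSup_subtype']
  refine IntermediateField.normal_iSup K Ω _ (h := fun N => ?_)
  have h := N.2
  simp only [Set.mem_setOf_eq] at h
  exact h.1.to_normal

theorem pClosure_separable (p : ℕ) (K : Type*) [Field K] (Ω : Type*) [Field Ω] [Algebra K Ω] :
    Algebra.IsSeparable K (pClosure p K Ω) := by
  rw [pClosure]
  rw [iSup_subtype']
  refine IntermediateField.isSeparable_iSup K Ω (h := fun N => ?_)
  have h := N.2
  simp only [Set.mem_setOf_eq] at h
  exact h.1.to_isSeparable

end GaloisAux

set_option maxHeartbeats 2000000 in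
set_option synthInstance.maxHeartbeats 400000 in
/-- let `(K, v)` be a valued field such that `v` extends uniquely to the
maximal pro-`p` extension `K(p)` (taken inside an algebraic closure of `K`), and let
`f ∈ O_v[T]` split in `K(p)`.  If `a ∈ O_v` satisfies `f̄(ā) = 0` and `f̄'(ā) ≠ 0` in the
residue field, then there is `α ∈ O_v` with `f(α) = 0` and `ᾱ = ā`. -/
theorem pHenselian_lifts_roots (p : ℕ) (hp : p.Prime)
    {K : Type*} [Field K] (v : ValuationSubring K)
    (hhens : ∃! W : ValuationSubring (pClosure p K (AlgebraicClosure K)),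
      W.comap (algebraMap K (pClosure p K (AlgebraicClosure K))) = v)
    (f : Polynomial v)
    (hsplit : Polynomial.Splits
      ((f.map v.subtype).map (algebraMap K (pClosure p K (AlgebraicClosure K)))))
    (a : v)
    (ha : (f.map (IsLocalRing.residue v)).IsRoot (IsLocalRing.residue v a))
    (ha' : ¬ (Polynomial.derivative (f.map (IsLocalRing.residue v))).IsRoot
      (IsLocalRing.residue v a)) :
    ∃ α : v, f.IsRoot α ∧ IsLocalRing.residue v α = IsLocalRing.residue v a := by
  classical
  open Polynomial in
  obtain ⟨W, hW, hWuniq⟩ := hhens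
  set F : K[X] := f.map v.subtype with hF
  set ι : K →+* ↥(pClosure p K (AlgebraicClosure K)) :=
    (algebraMap K ↥(pClosure p K (AlgebraicClosure K))) with hι
  set P : Polynomial ↥(pClosure p K (AlgebraicClosure K)) := F.map ι with hP
  have hf0 : f ≠ 0 := by
    intro h
    apply ha'
    rw [h]
    simp
  have hPsplits : P.Splits := hsplit
  have hιinj : Function.Injective ι := ι.injective
  have hsubinj : Function.Injective v.subtype := Subtype.coe_injective
  have hF0 : F ≠ 0 := (Polynomial.map_ne_zero_iff hsubinj).2 hf0
  have hP0 : P ≠ 0 := (Polynomial.map_ne_zero_iff hιinj).2 hF0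
  have hmem : ∀ x : K, ι x ∈ W ↔ x ∈ v := by
    intro x
    rw [← hW]
    exact (ValuationSubring.mem_comap).symm
  have hval_le : ∀ x : K, x ∈ v → W.valuation (ι x) ≤ 1 := fun x hx =>
    (ValuationSubring.valuation_le_one_iff W _).2 ((hmem x).2 hx)
  have hc : ∀ n, W.valuation (P.coeff n) ≤ 1 := by
    intro n
    rw [hP, Polynomial.coeff_map, hF, Polynomial.coeff_map]
    exact hval_le _ (f.coeff n).2
  have hb : W.valuation (ι ↑a) ≤ 1 := hval_le _ a.2
  have hkey : ∀ x : K, (v.valuation x < 1 ↔ W.valuation (ι x) < 1) := by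
    intro x
    rcases eq_or_ne x 0 with rfl | hx
    · simp
    · have h1 : ι x ≠ 0 := fun h => hx (hιinj (by rwa [map_zero]))
      rw [PHenselAux.lt_one_iff_inv_notMem v hx, PHenselAux.lt_one_iff_inv_notMem W h1,
        ← map_inv₀ ι]
      exact not_congr (hmem x⁻¹).symm
  have haF : v.valuation ↑(f.eval a) < 1 := by
    have h1 : IsLocalRing.residue v (f.eval a) = 0 := by
      have h0 := ha
      rwa [Polynomial.IsRoot, Polynomial.eval_map, Polynomial.eval₂_at_apply] at h0
    have h2 : f.eval a ∈ IsLocalRing.maximalIdeal v := Ideal.Quotient.eq_zero_iff_mem.mp h1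
    exact (ValuationSubring.valuation_lt_one_iff v _).1 h2
  have hevF : ∀ x : v, F.eval (x : K) = ↑(f.eval x) := by
    intro x
    rw [hF, Polynomial.eval_map, show ((x : K)) = v.subtype x from rfl,
      Polynomial.eval₂_at_apply]
    rfl
  have hPb : W.valuation (P.eval (ι ↑a)) < 1 := by
    have hev : P.eval (ι ↑a) = ι ↑(f.eval a) := by
      rw [hP, Polynomial.eval_map, Polynomial.eval₂_at_apply, hevF a]
    rw [hev]
    exact (hkey _).1 haF
  have hd1 : W.valuation ((Polynomial.derivative P).eval (ι ↑a)) = 1 := by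
    have hev : (Polynomial.derivative P).eval (ι ↑a) = ι ↑((Polynomial.derivative f).eval a) := by
      rw [hP, Polynomial.derivative_map, Polynomial.eval_map, Polynomial.eval₂_at_apply,
        hF, Polynomial.derivative_map, Polynomial.eval_map,
        show ((a : K)) = v.subtype a from rfl, Polynomial.eval₂_at_apply]
      rfl
    have hnot : ¬ v.valuation ↑((Polynomial.derivative f).eval a) < 1 := by
      intro hlt
      apply ha'
      have h2 : (Polynomial.derivative f).eval a ∈ IsLocalRing.maximalIdeal v :=
        (ValuationSubring.valuation_lt_one_iff v _).2 hlt
      rw [Polynomial.IsRoot, Polynomial.derivative_map, Polynomial.eval_map,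
        Polynomial.eval₂_at_apply]
      exact Ideal.Quotient.eq_zero_iff_mem.mpr h2
    rw [hev]
    refine le_antisymm (hval_le _ ((Polynomial.derivative f).eval a).2) ?_
    by_contra hlt
    push_neg at hlt
    exact hnot ((hkey _).2 hlt)
  obtain ⟨r, hrP, hrb, hruniq⟩ := PHenselAux.exists_unique_close_root W hPsplits hc hb hPb hd1
  have hrroot : P.eval r = 0 := (Polynomial.mem_roots hP0).1 hrP
  haveI hNorm : Normal K ↥(pClosure p K (AlgebraicClosure K)) :=
    pClosure_normal p K (AlgebraicClosure K)
  haveI hSep : Algebra.IsSeparable K ↥(pClosure p K (AlgebraicClosure K)) :=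
    pClosure_separable p K (AlgebraicClosure K)
  have hfix : ∀ σ : ↥(pClosure p K (AlgebraicClosure K)) ≃ₐ[K]
      ↥(pClosure p K (AlgebraicClosure K)), σ r = r := by
    intro σ
    set σr : ↥(pClosure p K (AlgebraicClosure K)) →+*
      ↥(pClosure p K (AlgebraicClosure K)) := σ.toAlgHom.toRingHom with hσr
    have hWσ : W.comap σr = W := by
      apply hWuniq
      ext x
      rw [ValuationSubring.mem_comap, ValuationSubring.mem_comap]
      rw [show σr (ι x) = ι x from σ.commutes x]
      exact hmem x
    have hmemσ : ∀ y, σr y ∈ W ↔ y ∈ W := by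
      intro y
      conv_rhs => rw [← hWσ]
      exact (ValuationSubring.mem_comap).symm
    have hltσ : ∀ y, W.valuation (σr y) < 1 ↔ W.valuation y < 1 := by
      intro y
      rcases eq_or_ne y 0 with rfl | hy
      · simp
      · have hsy : σr y ≠ 0 := fun h => hy (by
          have := congrArg σ.symm (show σ y = 0 from h)
          simpa using this)
        rw [PHenselAux.lt_one_iff_inv_notMem W hsy, PHenselAux.lt_one_iff_inv_notMem W hy,
          ← map_inv₀ σr]
        exact not_congr (hmemσ _)
    have hσroot : σ r ∈ P.roots := by
      rw [Polynomial.mem_roots hP0]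
      have hPev : P.eval (σ r) = σ (P.eval r) := by
        rw [hP, hι, Polynomial.eval_map, Polynomial.eval_map, ← Polynomial.aeval_def,
          ← Polynomial.aeval_def]
        exact Polynomial.aeval_algHom_apply σ.toAlgHom r F
      rw [Polynomial.IsRoot, hPev, hrroot, map_zero]
    have hσb : W.valuation (ι ↑a - σ r) < 1 := by
      have heq : ι ↑a - σ r = σr (ι ↑a - r) := by
        rw [map_sub]
        congr 1
        exact (σ.commutes ↑a).symm
      rw [heq]
      exact (hltσ _).2 hrb
    exact hruniq (σ r) hσroot hσb
  obtain ⟨α₀, hα₀⟩ := fixed_point_mem_range hfix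
  have hrle : W.valuation r ≤ 1 := by
    rw [show r = ι ↑a - (ι ↑a - r) by ring]
    exact le_trans (W.valuation.map_sub _ _) (max_le hb hrb.le)
  have hα₀v : α₀ ∈ v := by
    apply (hmem α₀).1
    rw [show ι α₀ = r from hα₀]
    exact (ValuationSubring.valuation_le_one_iff W _).1 hrle
  refine ⟨⟨α₀, hα₀v⟩, ?_, ?_⟩
  · have h1 : ι ↑(f.eval ⟨α₀, hα₀v⟩) = 0 := by
      have e1 : ι ↑(f.eval (⟨α₀, hα₀v⟩ : v)) = Polynomial.eval₂ ι (ι α₀) F := by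
        rw [← hevF ⟨α₀, hα₀v⟩]
        exact (Polynomial.eval₂_at_apply ι α₀).symm
      rw [e1, ← Polynomial.eval_map, ← hP, show ι α₀ = r from hα₀]
      exact hrroot
    have h0 : (↑(f.eval (⟨α₀, hα₀v⟩ : v)) : K) = 0 := by
      apply hιinj
      rw [h1, map_zero]
    exact Subtype.coe_injective h0
  · have hsub : (⟨α₀, hα₀v⟩ - a : v) ∈ IsLocalRing.maximalIdeal v := by
      rw [ValuationSubring.valuation_lt_one_iff]
      apply (hkey _).2
      have hcoe : ((⟨α₀, hα₀v⟩ - a : v) : K) = α₀ - ↑a := rfl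
      rw [hcoe, map_sub, show ι α₀ = r from hα₀,
        show r - ι ↑a = -(ι ↑a - r) by ring, Valuation.map_neg]
      exact hrb
    exact (Ideal.Quotient.mk_eq_mk_iff_sub_mem _ _).2 hsub
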